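/- Let Ω ⊆ ℕ² be a semilinear set. Then the lower envelope Env(Ω) = (inf { ℓ : (k,ℓ) ∈ Ω })_k is a semi-arithmetic sequence in ℕ ∪ {∞}. -/

import Mathlib

noncomputable def Env (Ω : Set (ℕ × ℕ)) (k : ℕ) : ℕ∞ :=
  sInf {x : ℕ∞ | ∃ ℓ : ℕ, (k, ℓ) ∈ Ω ∧ x = (ℓ : ℕ∞)}

/-- A linear subset of an additive commutative monoid: a translate of a
finitely generated submonoid. -/
def IsLinear {M : Type*} [AddCommMonoid M] (Ω : Set M) : Prop :=
  ∃ v : M, ∃ V : Finset M,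
    Ω = (fun x => v + x) '' (AddSubmonoid.closure (V : Set M) : Set M)

/-- A semilinear set is a finite union of linear sets. -/
def IsSemilinear {M : Type*} [AddCommMonoid M] (Ω : Set M) : Prop :=
  ∃ n : ℕ, ∃ L : Fin n → Set M, (∀ i, IsLinear (L i)) ∧ Ω = ⋃ i, L i

def EvArith (a : ℕ → ℕ∞) (d : ℕ) : Prop :=
  ∃ N : ℕ, ∀ k ≥ N, a (k + 1) = a k + (d : ℕ∞)

def SemiArith (a : ℕ → ℕ∞) (m : ℕ) : Prop :=
  0 < m ∧ ∀ n : ℕ, ∃ d : ℕ, EvArith (fun k => a (m * k + n)) d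




lemma env_le {Ω : Set (ℕ × ℕ)} {k ℓ : ℕ} (h : (k, ℓ) ∈ Ω) : Env Ω k ≤ ℓ :=
  sInf_le ⟨ℓ, h, rfl⟩

lemma env_cases (Ω : Set (ℕ × ℕ)) (k : ℕ) :
    Env Ω k = ⊤ ∨ ∃ ℓ : ℕ, (k, ℓ) ∈ Ω ∧ Env Ω k = (ℓ : ℕ∞) := by
  by_cases h : {ℓ : ℕ | (k, ℓ) ∈ Ω}.Nonempty
  · right
    refine ⟨sInf {ℓ : ℕ | (k, ℓ) ∈ Ω}, Nat.sInf_mem h,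
      le_antisymm (env_le (Nat.sInf_mem h)) (le_sInf ?_)⟩
    rintro x ⟨ℓ, hℓ, rfl⟩
    exact_mod_cast Nat.sInf_le hℓ
  · left
    have he : {x : ℕ∞ | ∃ ℓ : ℕ, (k, ℓ) ∈ Ω ∧ x = (ℓ : ℕ∞)} = ∅ := by
      ext x
      simp only [Set.mem_setOf_eq, Set.mem_empty_iff_false, iff_false, not_exists]
      intro ℓ hℓ
      exact absurd ⟨ℓ, hℓ.1⟩ h
    rw [Env, he, sInf_empty]

lemma env_top_of_empty {Ω : Set (ℕ × ℕ)} {k : ℕ} (h : ∀ ℓ : ℕ, (k, ℓ) ∉ Ω) :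
    Env Ω k = ⊤ := by
  rcases env_cases Ω k with h' | ⟨ℓ, hℓ, _⟩
  · exact h'
  · exact absurd hℓ (h ℓ)

lemma env_union (A B : Set (ℕ × ℕ)) (k : ℕ) :
    Env (A ∪ B) k = Env A k ⊓ Env B k := by
  rw [Env, Env, Env, ← sInf_union]
  congr 1
  ext x
  constructor
  · rintro ⟨ℓ, h | h, rfl⟩
    · exact Or.inl ⟨ℓ, h, rfl⟩
    · exact Or.inr ⟨ℓ, h, rfl⟩
  · rintro (⟨ℓ, h, rfl⟩ | ⟨ℓ, h, rfl⟩)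
    · exact ⟨ℓ, Or.inl h, rfl⟩
    · exact ⟨ℓ, Or.inr h, rfl⟩


/-- Key sequence lemma: step upper bound plus linear lower bound forces
eventual arithmetic behaviour. -/
lemma evArith_of_step_lb (b : ℕ → ℕ∞) (q C N0 : ℕ)
    (hstep : ∀ j ≥ N0, b (j + 1) ≤ b j + (q : ℕ∞))
    (hlb : ∀ j ≥ N0, ((q * j : ℕ) : ℕ∞) ≤ b j + (C : ℕ∞)) :
    EvArith b q := by
  set c : ℕ → ℕ∞ := fun j => (b j + (C : ℕ∞)) - ((q * j : ℕ) : ℕ∞) with hc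
  have hcb : ∀ j ≥ N0, b j + (C : ℕ∞) = c j + ((q * j : ℕ) : ℕ∞) :=
    fun j hj => (tsub_add_cancel_of_le (hlb j hj)).symm
  have hmono : ∀ j ≥ N0, c (j + 1) ≤ c j := by
    intro j hj
    rw [hc]
    refine tsub_le_iff_right.2 ?_
    calc b (j + 1) + (C : ℕ∞) ≤ (b j + (C : ℕ∞)) + (q : ℕ∞) := by
          calc b (j + 1) + (C : ℕ∞) ≤ (b j + (q : ℕ∞)) + (C : ℕ∞) :=
                add_le_add_left (hstep j hj) _
            _ = (b j + (C : ℕ∞)) + (q : ℕ∞) := by ring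
      _ = (c j + ((q * j : ℕ) : ℕ∞)) + (q : ℕ∞) := by rw [← hcb j hj]
      _ = c j + ((q * (j + 1) : ℕ) : ℕ∞) := by push_cast; ring
  -- antitone on the tail
  have hchain : ∀ j ≥ N0, ∀ j' , j ≤ j' → c j' ≤ c j := by
    intro j hj j' hjj'
    induction j' with
    | zero =>
      obtain rfl := Nat.le_zero.mp hjj'
      exact le_rfl
    | succ j' ih =>
      rcases Nat.lt_or_ge j (j' + 1) with h' | h'
      · have hj'N : j ≤ j' := by omega
        exact le_trans (hmono j' (le_trans hj hj'N)) (ih hj'N)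
      · have : j = j' + 1 := by omega
        subst this; exact le_rfl
  -- pick a minimal value on the tail
  obtain ⟨x, ⟨J, hJN, rfl⟩, hxmin⟩ :=
    (wellFounded_lt (α := ℕ∞)).has_min (c '' {j | N0 ≤ j}) ⟨c N0, N0, Set.mem_setOf_eq.mpr le_rfl, rfl⟩
  have hconst : ∀ j ≥ J, c j = c J := by
    intro j hj
    refine le_antisymm (hchain J hJN j hj) ?_
    have := hxmin (c j) ⟨j, le_trans hJN hj, rfl⟩
    exact not_lt.mp this
  refine ⟨J, fun k hk => ?_⟩
  have hkN : N0 ≤ k := le_trans hJN hk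
  have h1 := hcb k hkN
  have h2 := hcb (k + 1) (by omega)
  rw [hconst k hk] at h1
  rw [hconst (k + 1) (by omega)] at h2
  have key : b (k + 1) + (C : ℕ∞) = (b k + (q : ℕ∞)) + (C : ℕ∞) := by
    rw [h2, show ((q * (k + 1) : ℕ) : ℕ∞) = ((q * k : ℕ) : ℕ∞) + (q : ℕ∞) by push_cast; ring,
      ← add_assoc, ← h1]
    ring
  exact WithTop.add_right_cancel (ENat.coe_ne_top C) key


lemma evArith_tail {a : ℕ → ℕ∞} {d : ℕ} (h : EvArith a d) (N' : ℕ) :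
    ∃ N ≥ N', (∀ k ≥ N, a k = ⊤) ∨
      (∃ A : ℕ, ∀ k ≥ N, a k = ((A + d * (k - N) : ℕ) : ℕ∞)) := by
  obtain ⟨N0, hN0⟩ := h
  obtain ⟨N, hNN0, hNN'⟩ : ∃ N, N0 ≤ N ∧ N' ≤ N :=
    ⟨max N0 N', le_max_left _ _, le_max_right _ _⟩
  refine ⟨N, hNN', ?_⟩
  cases haN : a N with
  | top =>
    left
    intro k hk
    induction k with
    | zero =>
      obtain rfl := Nat.le_zero.mp hk
      exact haN
    | succ k ih =>
      rcases Nat.lt_or_ge N (k + 1) with h' | h'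
      · have hkN : N ≤ k := by omega
        rw [hN0 k (le_trans hNN0 hkN), ih hkN]
        rfl
      · have : N = k + 1 := by omega
        rw [← this]; exact haN
  | coe A =>
    right
    refine ⟨A, ?_⟩
    intro k hk
    induction k with
    | zero =>
      obtain rfl := Nat.le_zero.mp hk
      simpa using haN
    | succ k ih =>
      rcases Nat.lt_or_ge N (k + 1) with h' | h'
      · have hkN : N ≤ k := by
          omega
        rw [hN0 k (le_trans hNN0 hkN), ih hkN,
          show (A + d * (k + 1 - N) : ℕ) = (A + d * (k - N) : ℕ) + d by
            have : k + 1 - N = (k - N) + 1 := by omega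
            rw [this]; ring]
        push_cast
        ring
      · have : N = k + 1 := by omega
        rw [← this]
        simp [haN, Nat.sub_self]


lemma evArith_min_affine {a b : ℕ → ℕ∞} {d e A B N : ℕ} (hde : d ≤ e)
    (ha : ∀ k ≥ N, a k = ((A + d * (k - N) : ℕ) : ℕ∞))
    (hb : ∀ k ≥ N, b k = ((B + e * (k - N) : ℕ) : ℕ∞)) :
    ∃ f : ℕ, EvArith (fun k => a k ⊓ b k) f := by
  rcases eq_or_lt_of_le hde with rfl | hlt
  · refine ⟨d, N, fun k hk => ?_⟩
    simp only
    rw [ha k hk, hb k hk, ha (k + 1) (by omega), hb (k + 1) (by omega)]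
    have hmin : ∀ x y : ℕ, ((x : ℕ∞) ⊓ (y : ℕ∞)) = ((min x y : ℕ) : ℕ∞) := by
      intro x y
      rcases le_total x y with h | h
      · rw [min_eq_left h, inf_eq_left.mpr (by exact_mod_cast h)]
      · rw [min_eq_right h, inf_eq_right.mpr (by exact_mod_cast h)]
    rw [hmin, hmin]
    have harith : min (A + d * (k + 1 - N)) (B + d * (k + 1 - N)) =
        min (A + d * (k - N)) (B + d * (k - N)) + d := by
      have h1 : k + 1 - N = (k - N) + 1 := by omega
      rw [h1, Nat.mul_succ]
      omega
    rw [harith]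
    push_cast
    ring
  · refine ⟨d, N + A, fun k hk => ?_⟩
    have hmin : ∀ j, N + A ≤ j → a j ⊓ b j = a j := by
      intro j hj
      refine inf_eq_left.mpr ?_
      rw [ha j (by omega), hb j (by omega)]
      have : A + d * (j - N) ≤ B + e * (j - N) := by
        have h1 : A ≤ j - N := by omega
        have h2 : d * (j - N) + (j - N) ≤ e * (j - N) := by
          have h3 : (d + 1) * (j - N) ≤ e * (j - N) := Nat.mul_le_mul_right _ (by omega)
          have h4 : (d + 1) * (j - N) = d * (j - N) + (j - N) := by ring
          omega
        omega
      exact_mod_cast this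
    simp only
    rw [hmin k hk, hmin (k + 1) (by omega), ha k (by omega), ha (k + 1) (by omega)]
    rw [show (A + d * (k + 1 - N) : ℕ) = (A + d * (k - N) : ℕ) + d by
      have : k + 1 - N = (k - N) + 1 := by omega
      rw [this]; ring]
    push_cast
    ring

lemma evArith_min {a b : ℕ → ℕ∞} {d e : ℕ} (ha : EvArith a d) (hb : EvArith b e) :
    ∃ f : ℕ, EvArith (fun k => a k ⊓ b k) f := by
  obtain ⟨Na, _, hA⟩ := evArith_tail ha 0
  obtain ⟨Nb, _, hB⟩ := evArith_tail hb Na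
  -- re-express the a-tail relative to Nb
  have hA' : (∀ k ≥ Nb, a k = ⊤) ∨
      (∃ A : ℕ, ∀ k ≥ Nb, a k = ((A + d * (k - Nb) : ℕ) : ℕ∞)) := by
    obtain ⟨Nb', hNb', _⟩ := evArith_tail ha 0
    rcases hA with h | ⟨A, hAf⟩
    · exact Or.inl fun k hk => h k (by omega)
    · refine Or.inr ⟨A + d * (Nb - Na), fun k hk => ?_⟩
      rw [hAf k (by omega)]
      congr 1
      have : k - Na = (Nb - Na) + (k - Nb) := by omega
      rw [this, Nat.mul_add]
      ring
  rcases hA' with hA' | ⟨A, hA'⟩ <;> rcases hB with hB' | ⟨B, hB'⟩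
  · refine ⟨0, Nb, fun k hk => ?_⟩
    simp only
    rw [hA' k hk, hB' k hk, hA' (k + 1) (by omega), hB' (k + 1) (by omega)]
    simp
  · refine ⟨e, Nb, fun k hk => ?_⟩
    simp only
    rw [hA' k hk, hA' (k + 1) (by omega), top_inf_eq, top_inf_eq,
      hB' k hk, hB' (k + 1) (by omega)]
    rw [show (B + e * (k + 1 - Nb) : ℕ) = (B + e * (k - Nb) : ℕ) + e by
      have : k + 1 - Nb = (k - Nb) + 1 := by omega
      rw [this]; ring]
    push_cast
    ring
  · refine ⟨d, Nb, fun k hk => ?_⟩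
    simp only
    rw [hB' k hk, hB' (k + 1) (by omega), inf_top_eq, inf_top_eq,
      hA' k hk, hA' (k + 1) (by omega)]
    rw [show (A + d * (k + 1 - Nb) : ℕ) = (A + d * (k - Nb) : ℕ) + d by
      have : k + 1 - Nb = (k - Nb) + 1 := by omega
      rw [this]; ring]
    push_cast
    ring
  · rcases le_total d e with hde | hed
    · exact evArith_min_affine hde hA' hB'
    · obtain ⟨f, hf⟩ := evArith_min_affine hed hB' hA'
      refine ⟨f, ?_⟩
      have : (fun k => b k ⊓ a k) = (fun k => a k ⊓ b k) := by
        funext k; exact inf_comm _ _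
      rwa [this] at hf

lemma semiArith_mul {a : ℕ → ℕ∞} {m : ℕ} (h : SemiArith a m) (c : ℕ) (hc : 0 < c) :
    SemiArith a (m * c) := by
  obtain ⟨hm, h⟩ := h
  refine ⟨by positivity, fun n => ?_⟩
  obtain ⟨d, N, hN⟩ := h n
  refine ⟨c * d, N, fun k hk => ?_⟩
  have key : ∀ t : ℕ, a (m * (c * k + t) + n) = a (m * (c * k) + n) + ((t * d : ℕ) : ℕ∞) := by
    intro t
    induction t with
    | zero => simp
    | succ t ih =>
      have hCK : c * k + t ≥ N := by
        have : k ≤ c * k := Nat.le_mul_of_pos_left k hc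
        omega
      have := hN (c * k + t) hCK
      simp only at this
      rw [show c * k + (t + 1) = (c * k + t) + 1 from rfl, this, ih]
      push_cast
      ring
  have hck := key c
  simp only
  rw [show m * c * (k + 1) = m * (c * k + c) by ring, hck, show m * c * k = m * (c * k) by ring]

lemma semiArith_min {a b : ℕ → ℕ∞} {m : ℕ} (ha : SemiArith a m) (hb : SemiArith b m) :
    SemiArith (fun k => a k ⊓ b k) m := by
  refine ⟨ha.1, fun n => ?_⟩
  obtain ⟨d, hd⟩ := ha.2 n
  obtain ⟨e, he⟩ := hb.2 n
  exact evArith_min hd he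


lemma semiArith_env_linear {Ω : Set (ℕ × ℕ)} (h : IsLinear Ω) :
    ∃ m : ℕ, SemiArith (Env Ω) m := by
  obtain ⟨v, V, rfl⟩ := h
  by_cases hV' : (V.filter fun x => 0 < x.1).Nonempty
  · -- there is a generator with positive first coordinate
    obtain ⟨p, hpF, hpmin⟩ :=
      (V.filter fun x => 0 < x.1).exists_min_image (fun x => (x.2 : ℚ) / (x.1 : ℚ)) hV'
    have hp1 : 0 < p.1 := (Finset.mem_filter.mp hpF).2
    have hpV : p ∈ V := (Finset.mem_filter.mp hpF).1
    have hratio : ∀ x ∈ V, p.2 * x.1 ≤ x.2 * p.1 := by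
      intro x hx
      rcases Nat.eq_zero_or_pos x.1 with h0 | hx1
      · simp [h0]
      · have hxF : x ∈ V.filter fun x => 0 < x.1 := Finset.mem_filter.mpr ⟨hx, hx1⟩
        have := hpmin x hxF
        have hq : (p.2 : ℚ) * (x.1 : ℚ) ≤ (x.2 : ℚ) * (p.1 : ℚ) := by
          rw [div_le_div_iff₀ (by exact_mod_cast hp1) (by exact_mod_cast hx1)] at this
          exact this
        exact_mod_cast hq
    have hMlb : ∀ s ∈ AddSubmonoid.closure (V : Set (ℕ × ℕ)), p.2 * s.1 ≤ s.2 * p.1 := by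
      intro s hs
      refine AddSubmonoid.closure_induction ?_ ?_ ?_ hs
      · exact fun x hx => hratio x hx
      · simp
      · intro x y _ _ hx hy
        have h1 : (x + y).1 = x.1 + y.1 := rfl
        have h2 : (x + y).2 = x.2 + y.2 := rfl
        rw [h1, h2, Nat.mul_add, Nat.add_mul]
        omega
    set Ω := (fun x => v + x) '' (AddSubmonoid.closure (V : Set (ℕ × ℕ)) : Set (ℕ × ℕ)) with hΩdef
    have hmemstep : ∀ k ℓ : ℕ, (k, ℓ) ∈ Ω → (k + p.1, ℓ + p.2) ∈ Ω := by
      rintro k ℓ ⟨s, hs, hvs⟩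
      refine ⟨s + p, add_mem hs (AddSubmonoid.subset_closure hpV), ?_⟩
      have hvs' : v + s = (k, ℓ) := hvs
      show v + (s + p) = (k + p.1, ℓ + p.2)
      rw [← add_assoc, hvs']
      exact Prod.ext rfl rfl
    have hstep : ∀ k : ℕ, Env Ω (k + p.1) ≤ Env Ω k + (p.2 : ℕ∞) := by
      intro k
      rcases env_cases Ω k with h | ⟨ℓ, hℓ, hEq⟩
      · rw [h, top_add]; exact le_top
      · rw [hEq, ← Nat.cast_add]
        exact env_le (hmemstep k ℓ hℓ)
    have hlbΩ : ∀ k ℓ : ℕ, (k, ℓ) ∈ Ω → p.2 * k ≤ (ℓ + p.2 * v.1) * p.1 := by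
      rintro k ℓ ⟨s, hs, hvs⟩
      have hk : k = v.1 + s.1 := by
        have := congrArg Prod.fst hvs
        simpa using this.symm
      have hℓ : ℓ = v.2 + s.2 := by
        have := congrArg Prod.snd hvs
        simpa using this.symm
      have hls := hMlb s hs
      subst hk hℓ
      have e3 : p.2 * v.1 ≤ p.2 * v.1 * p.1 := Nat.le_mul_of_pos_right _ hp1
      calc p.2 * (v.1 + s.1) = p.2 * v.1 + p.2 * s.1 := by ring
        _ ≤ p.2 * v.1 * p.1 + s.2 * p.1 := Nat.add_le_add e3 hls
        _ ≤ v.2 * p.1 + s.2 * p.1 + p.2 * v.1 * p.1 :=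
            le_trans (Nat.le_add_right _ (v.2 * p.1)) (le_of_eq (by ring))
        _ = (v.2 + s.2 + p.2 * v.1) * p.1 := by ring
    refine ⟨p.1, hp1, fun n => ⟨p.2, ?_⟩⟩
    refine evArith_of_step_lb (fun j => Env Ω (p.1 * j + n)) p.2 (p.2 * v.1) 0 ?_ ?_
    · intro j _
      rw [show p.1 * (j + 1) + n = (p.1 * j + n) + p.1 by ring]
      exact hstep _
    · intro j _
      rcases env_cases Ω (p.1 * j + n) with h | ⟨ℓ, hℓ, hEq⟩
      · rw [h, top_add]; exact le_top
      · rw [hEq, ← Nat.cast_add, Nat.cast_le]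
        have h1 := hlbΩ _ _ hℓ
        have h2 : p.2 * j * p.1 ≤ (ℓ + p.2 * v.1) * p.1 := by
          calc p.2 * j * p.1 = p.2 * (p.1 * j) := by ring
            _ ≤ p.2 * (p.1 * j + n) := Nat.mul_le_mul_left _ (by omega)
            _ ≤ (ℓ + p.2 * v.1) * p.1 := h1
        exact Nat.le_of_mul_le_mul_right h2 hp1
  · -- all generators have first coordinate 0
    have hall : ∀ x ∈ V, x.1 = 0 := by
      intro x hx
      by_contra h0
      exact hV' ⟨x, Finset.mem_filter.mpr ⟨hx, Nat.pos_of_ne_zero h0⟩⟩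
    have hM0 : ∀ s ∈ AddSubmonoid.closure (V : Set (ℕ × ℕ)), s.1 = 0 := by
      intro s hs
      refine AddSubmonoid.closure_induction ?_ ?_ ?_ hs
      · exact fun x hx => hall x hx
      · rfl
      · intro x y _ _ hx hy
        show x.1 + y.1 = 0
        omega
    refine ⟨1, one_pos, fun n => ⟨0, v.1 + 1, fun k hk => ?_⟩⟩
    have htop : ∀ k' : ℕ, v.1 < k' →
        Env ((fun x => v + x) '' (AddSubmonoid.closure (V : Set (ℕ × ℕ)) : Set (ℕ × ℕ))) k' = ⊤ := by
      intro k' hk'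
      refine env_top_of_empty ?_
      rintro ℓ ⟨s, hs, hvs⟩
      have hfst : k' = v.1 + s.1 := by
        have := congrArg Prod.fst hvs
        simpa using this.symm
      rw [hM0 s hs] at hfst
      omega
    simp only
    rw [htop (1 * (k + 1) + n) (by omega), htop (1 * k + n) (by omega)]
    simp


lemma semiArith_env_iUnion :
    ∀ (n : ℕ) (L : Fin n → Set (ℕ × ℕ)), (∀ i, IsLinear (L i)) →
      ∃ m : ℕ, SemiArith (Env (⋃ i, L i)) m := by
  intro n
  induction n with
  | zero =>
    intro L _
    refine ⟨1, one_pos, fun n => ⟨0, 0, fun k _ => ?_⟩⟩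
    have hE : ∀ k' : ℕ, Env (⋃ i : Fin 0, L i) k' = ⊤ := by
      intro k'
      refine env_top_of_empty ?_
      intro ℓ hℓ
      simp only [Set.iUnion_of_empty] at hℓ
      exact hℓ
    simp only
    rw [hE, hE]
    simp
  | succ n ih =>
    intro L hL
    have hsplit : ⋃ i, L i = L 0 ∪ ⋃ i : Fin n, L i.succ := by
      ext x
      simp only [Set.mem_iUnion, Set.mem_union]
      exact Fin.exists_fin_succ
    obtain ⟨m1, hm1⟩ := semiArith_env_linear (hL 0)
    obtain ⟨m2, hm2⟩ := ih (fun i => L i.succ) (fun i => hL i.succ)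
    have hfun : Env (⋃ i, L i) = fun k => Env (L 0) k ⊓ Env (⋃ i : Fin n, L i.succ) k := by
      funext k
      rw [hsplit, env_union]
    rw [hfun]
    have h1 : SemiArith (Env (L 0)) (m1 * m2) := semiArith_mul hm1 m2 hm2.1
    have h2 : SemiArith (Env (⋃ i : Fin n, L i.succ)) (m1 * m2) := by
      rw [mul_comm]
      exact semiArith_mul hm2 m1 hm1.1
    exact ⟨m1 * m2, semiArith_min h1 h2⟩

theorem stmt_9 (Ω : Set (ℕ × ℕ)) (hΩ : IsSemilinear Ω) :
    ∃ m : ℕ, SemiArith (Env Ω) m := by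
  obtain ⟨n, L, hL, rfl⟩ := hΩ
  exact semiArith_env_iUnion n L hL
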